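/- Suppose ∇φ(θ̂) = (1/n) Σ_i y_i/(1 + λ θ̂·y_i) with all 1 + λ θ̂·y_i > 0, and define weights w_i = (1/(1 + λ θ̂·y_i)) / Σ_j (1/(1 + λ θ̂·y_j)) and η̂ = ∇φ(θ̂)/(1 − λ ∇φ(θ̂)·θ̂). Then the weights w_i are nonnegative, sum to 1, and η̂ = Σ_{i=1}^n w_i y_i; in particular η̂ lies in the convex hull of {y_1, …, y_n}. -/

import Mathlib

open RealInnerProductSpace

/-- Under the first-order condition, the dual MLE `η̂ = ∇φ(θ̂)/(1 − λ ∇φ(θ̂)·θ̂)` is the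
convex combination `Σ_i w_i y_i` with weights `w_i ∝ 1/(1 + λ θ̂·y_i)`; in particular the
weights are nonnegative, sum to one, and `η̂` lies in the convex hull of the `y_i`. -/
theorem mle_dual_convex_combination (d n : ℕ) (hn : 0 < n) (lam : ℝ) (hlam : lam ≠ 0)
    (y : Fin n → EuclideanSpace ℝ (Fin d))
    (φ : EuclideanSpace ℝ (Fin d) → ℝ) (θhat : EuclideanSpace ℝ (Fin d))
    (hpos : ∀ i, 0 < 1 + lam * ⟪θhat, y i⟫)
    (hφ : DifferentiableAt ℝ φ θhat)
    (hden : 0 < 1 - lam * ⟪gradient φ θhat, θhat⟫)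
    (hgrad : gradient φ θhat = (n : ℝ)⁻¹ • ∑ i, (1 + lam * ⟪θhat, y i⟫)⁻¹ • y i)
    (w : Fin n → ℝ)
    (hw : w = fun i => (1 + lam * ⟪θhat, y i⟫)⁻¹ / ∑ j, (1 + lam * ⟪θhat, y j⟫)⁻¹)
    (ηhat : EuclideanSpace ℝ (Fin d))
    (hη : ηhat = (1 - lam * ⟪gradient φ θhat, θhat⟫)⁻¹ • gradient φ θhat) :
    (∀ i, 0 ≤ w i) ∧ (∑ i, w i = 1) ∧ ηhat = ∑ i, w i • y i ∧
      ηhat ∈ convexHull ℝ (Set.range y) := by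
  have hne : (Finset.univ : Finset (Fin n)).Nonempty := Finset.univ_nonempty_iff.2 ⟨⟨0, hn⟩⟩
  set a : Fin n → ℝ := fun i => (1 + lam * ⟪θhat, y i⟫)⁻¹ with ha
  have hapos : ∀ i, 0 < a i := fun i => inv_pos.2 (hpos i)
  have hSpos : 0 < ∑ j, a j := Finset.sum_pos (fun j _ => hapos j) hne
  have hn' : (n : ℝ) ≠ 0 := Nat.cast_ne_zero.2 hn.ne'
  -- per-term identity
  have hterm : ∀ i, lam * (a i * ⟪y i, θhat⟫) = 1 - a i := by
    intro i
    have h1 : a i * (1 + lam * ⟪θhat, y i⟫) = 1 := inv_mul_cancel₀ (hpos i).ne'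
    have h2 := real_inner_comm (y i) θhat
    rw [h2] at h1
    nlinarith [h1]
  have hsum : lam * ∑ x, (1 + lam * ⟪θhat, y x⟫)⁻¹ * ⟪y x, θhat⟫
      = (n : ℝ) - ∑ i, a i := by
    rw [Finset.mul_sum]
    have : ∑ x, lam * ((1 + lam * ⟪θhat, y x⟫)⁻¹ * ⟪y x, θhat⟫)
        = ∑ x : Fin n, (1 - a x) :=
      Finset.sum_congr rfl (fun i _ => hterm i)
    rw [this, Finset.sum_sub_distrib, Finset.sum_const, Finset.card_univ,
      Fintype.card_fin, nsmul_eq_mul, mul_one]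
  have hkey : 1 - lam * ⟪gradient φ θhat, θhat⟫ = (n : ℝ)⁻¹ * ∑ i, a i := by
    rw [hgrad, real_inner_smul_left, sum_inner]
    simp only [real_inner_smul_left]
    rw [← mul_assoc, mul_comm lam ((n:ℝ)⁻¹), mul_assoc, hsum]
    field_simp
    ring
  have hwpos : ∀ i, 0 ≤ w i := by
    intro i
    rw [hw]
    exact div_nonneg (hapos i).le hSpos.le
  have hwsum : ∑ i, w i = 1 := by
    rw [hw]
    rw [← Finset.sum_div]
    exact div_self hSpos.ne'
  have hηeq : ηhat = ∑ i, w i • y i := by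
    rw [hη, hkey, hgrad, hw, smul_smul]
    rw [Finset.smul_sum]
    refine Finset.sum_congr rfl (fun i _ => ?_)
    rw [smul_smul]
    congr 1
    show _ = (1 + lam * ⟪θhat, y i⟫)⁻¹ / ∑ j, a j
    rw [mul_inv, inv_inv, div_eq_mul_inv, mul_comm]
    congr 1
    rw [mul_comm (n:ℝ) _, mul_assoc, mul_inv_cancel₀ hn', mul_one]
  refine ⟨hwpos, hwsum, hηeq, ?_⟩
  rw [hηeq]
  exact (convex_convexHull ℝ (Set.range y)).sum_mem
    (fun i _ => hwpos i) hwsum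
    (fun i _ => subset_convexHull ℝ _ (Set.mem_range_self i))
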